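/- Let σ denote the average of T(Q) over all N! complete sequences Q. Then σ = (1/|S|) · Σ_{t=k}^{n} ( C(n,t) · Σ_{i=1}^{N} i · p_i(t) ), where p_i(t) = (C(t,k)/(N−i+1)) · ∏_{j=1}^{i−1} (1 − C(t,k)/(N−j+1)) (a rational number; note p_i(t) = 0 whenever i > N − C(t,k) + 1, since the product then contains a zero factor). -/

import Mathlib

/-- The set of scenes: subsets of `Fin n` with at least `k` elements. -/
def scenes (n k : ℕ) : Finset (Finset (Fin n)) :=
  Finset.univ.filter fun s => k ≤ s.card

/-- A complete sequence: a list of queries containing every `k`-element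
subset of `Fin n` exactly once. -/
def CompleteSeq (n k : ℕ) (Q : List (Finset (Fin n))) : Prop :=
  Q.Nodup ∧ ∀ q : Finset (Fin n), q ∈ Q ↔ q.card = k

/-- `tau n Q s` is the least (1-based) index `i` such that `q_i ⊆ s`. -/
def tau (n : ℕ) (Q : List (Finset (Fin n))) (s : Finset (Fin n)) : ℕ :=
  Q.findIdx (fun q => decide (q ⊆ s)) + 1

/-- The expected time to discovery `T(Q) = (1/|S|) Σ_{s∈S} τ(Q,s)`. -/
def T (n k : ℕ) (Q : List (Finset (Fin n))) : ℚ :=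
  ((scenes n k).card : ℚ)⁻¹ * ∑ s ∈ scenes n k, (tau n Q s : ℚ)

/-- `D n k Q i`: the number of scenes discovered by the query at (1-based)
position `i` of `Q` but not by any earlier query. -/
def D (n k : ℕ) (Q : List (Finset (Fin n))) (i : ℕ) : ℕ :=
  ((scenes n k).filter fun s =>
    Q.getD (i - 1) ∅ ⊆ s ∧ ∀ j < i - 1, ¬ Q.getD j ∅ ⊆ s).card

/-- The list obtained from `Q` by swapping the queries at (1-based)
positions `i` and `i+1`. -/
def swapAdj (n : ℕ) (Q : List (Finset (Fin n))) (i : ℕ) : List (Finset (Fin n)) :=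
  (Q.set (i - 1) (Q.getD i ∅)).set i (Q.getD (i - 1) ∅)

/-- The finite set of all complete sequences (all orderings of the `N = C(n,k)`
queries). -/
noncomputable def completeSeqs (n k : ℕ) : Finset (List (Finset (Fin n))) :=
  ((Finset.powersetCard k (Finset.univ : Finset (Fin n))).toList.permutations).toFinset

/-- `p_i(t) = (C(t,k)/(N−i+1)) · ∏_{j=1}^{i−1} (1 − C(t,k)/(N−j+1))`, the
probability that a scene with `t` true stars is first discovered at query `i`
of a uniformly random complete sequence. -/
def pp (n k t i : ℕ) : ℚ :=
  ((Nat.choose t k : ℚ) / ((Nat.choose n k - i + 1 : ℕ) : ℚ)) *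
    ∏ j ∈ Finset.Icc 1 (i - 1),
      (1 - (Nat.choose t k : ℚ) / ((Nat.choose n k - j + 1 : ℕ) : ℚ))


section AuxProof

open Finset List

variable {α : Type*} [DecidableEq α] [Inhabited α]

lemma perml_card (l : List α) (hl : l.Nodup) :
    l.permutations.toFinset.card = l.length.factorial := by
  rw [List.toFinset_card_of_nodup (List.nodup_permutations l hl), List.length_permutations]

lemma mem_perml {l Q : List α} : Q ∈ l.permutations.toFinset ↔ Q ~ l := by
  rw [List.mem_toFinset, List.mem_permutations]

lemma headI_cons_tail (Q : List α) (h : Q ≠ []) : Q.headI :: Q.tail = Q := by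
  cases Q with
  | nil => exact absurd rfl h
  | cons a t => rfl

lemma cnt_eq (p : α → Bool) :
    ∀ (i : ℕ) (l : List α), l.Nodup → i ≤ l.length →
    (l.permutations.toFinset.filter fun Q => (Q.take i).all p).card
      = (l.countP p).descFactorial i * (l.length - i).factorial := by
  intro i
  induction i with
  | zero =>
    intro l hl _
    simp [perml_card l hl]
  | succ i ih =>
    intro l hl hi
    have hlne : l ≠ [] := by
      intro h; rw [h] at hi; simp at hi
    have hmaps : ∀ Q ∈ l.permutations.toFinset.filter fun Q => (Q.take (i+1)).all p,
        Q.headI ∈ l.toFinset := by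
      intro Q hQ
      have hQp : Q ~ l := mem_perml.1 (Finset.mem_filter.1 hQ).1
      have hQne : Q ≠ [] := by
        intro h
        exact hlne ((h ▸ hQp).symm.eq_nil)
      rw [List.mem_toFinset]
      exact hQp.mem_iff.1 (by
        conv_lhs => rw [← headI_cons_tail Q hQne]
        exact List.mem_cons_self)
    rw [Finset.card_eq_sum_card_fiberwise hmaps]
    have hfib : ∀ x ∈ l.toFinset,
        ((l.permutations.toFinset.filter fun Q => (Q.take (i+1)).all p).filter
          fun Q => Q.headI = x).card
          = if p x then ((l.erase x).countP p).descFactorial i * ((l.erase x).length - i).factorial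
            else 0 := by
      intro x hx
      rw [List.mem_toFinset] at hx
      have hex : (l.erase x).length = l.length - 1 := List.length_erase_of_mem hx
      by_cases hpx : p x = true
      · rw [if_pos hpx, ← ih (l.erase x) (hl.erase x) (by omega)]
        apply Finset.card_bij' (fun Q _ => Q.tail) (fun v _ => x :: v)
        · intro Q hQ
          simp only [Finset.mem_filter] at hQ ⊢
          obtain ⟨⟨hQm, hQt⟩, hQh⟩ := hQ
          have hQp : Q ~ l := mem_perml.1 hQm
          have hQne : Q ≠ [] := fun h => hlne ((h ▸ hQp).symm.eq_nil)
          have hQeq : x :: Q.tail = Q := by rw [← hQh]; exact headI_cons_tail Q hQne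
          constructor
          · rw [mem_perml]
            exact (List.cons_perm_iff_perm_erase.1 (hQeq ▸ hQp)).2
          · rw [← hQeq] at hQt
            simp only [List.take_succ_cons, List.all_cons, Bool.and_eq_true] at hQt
            exact hQt.2
        · intro v hv
          simp only [Finset.mem_filter] at hv ⊢
          obtain ⟨hvm, hvt⟩ := hv
          refine ⟨⟨?_, ?_⟩, rfl⟩
          · rw [mem_perml]
            exact List.cons_perm_iff_perm_erase.2 ⟨hx, mem_perml.1 hvm⟩
          · rw [List.take_succ_cons, List.all_cons, hpx, hvt]; rfl
        · intro Q hQ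
          simp only [Finset.mem_filter] at hQ
          obtain ⟨⟨hQm, _⟩, hQh⟩ := hQ
          have hQp : Q ~ l := mem_perml.1 hQm
          have hQne : Q ≠ [] := fun h => hlne ((h ▸ hQp).symm.eq_nil)
          rw [← hQh]; exact headI_cons_tail Q hQne
        · intro v _; rfl
      · rw [if_neg hpx, Finset.card_eq_zero]
        rw [Finset.eq_empty_iff_forall_notMem]
        intro Q hQ
        simp only [Finset.mem_filter] at hQ
        obtain ⟨⟨hQm, hQt⟩, hQh⟩ := hQ
        have hQp : Q ~ l := mem_perml.1 hQm
        have hQne : Q ≠ [] := fun h => hlne ((h ▸ hQp).symm.eq_nil)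
        have hQeq : x :: Q.tail = Q := by rw [← hQh]; exact headI_cons_tail Q hQne
        rw [← hQeq] at hQt
        simp only [List.take_succ_cons, List.all_cons, Bool.and_eq_true] at hQt
        exact hpx hQt.1
    rw [Finset.sum_congr rfl hfib, ← Finset.sum_filter]
    have hcard : (l.toFinset.filter fun x => p x).card = l.countP p := by
      rw [← List.toFinset_filter, List.toFinset_card_of_nodup (hl.filter p),
        List.countP_eq_length_filter]
    have hterm : ∀ x ∈ l.toFinset.filter fun x => p x,
        ((l.erase x).countP p).descFactorial i * ((l.erase x).length - i).factorial
          = (l.countP p - 1).descFactorial i * (l.length - (i+1)).factorial := by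
      intro x hx
      rw [Finset.mem_filter, List.mem_toFinset] at hx
      obtain ⟨hxl, hpx⟩ := hx
      have h1 : l.countP p = (l.erase x).countP p + 1 := by
        conv_lhs => rw [(List.perm_cons_erase hxl).countP_eq p]
        simp [List.countP_cons, hpx]
      have h2 : (l.erase x).length = l.length - 1 := List.length_erase_of_mem hxl
      rw [h2, h1]
      congr 2
      omega
    rw [Finset.sum_congr rfl hterm, Finset.sum_const, hcard, smul_eq_mul, ← mul_assoc]
    have hBd : l.countP p * (l.countP p - 1).descFactorial i
        = (l.countP p).descFactorial (i+1) := by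
      cases hB : l.countP p with
      | zero => simp
      | succ b => rw [Nat.succ_sub_one, Nat.succ_descFactorial_succ]
    rw [hBd]

omit [DecidableEq α] [Inhabited α] in
lemma take_all_not (g : α → Bool) :
    ∀ (Q : List α) (i : ℕ), i ≤ Q.length →
      (((Q.take i).all fun a => !g a) = true ↔ i ≤ Q.findIdx g) := by
  intro Q
  induction Q with
  | nil => intro i hi; simp at hi; simp [hi]
  | cons a t ih =>
    intro i hi
    cases i with
    | zero => simp
    | succ i =>
      simp only [List.take_succ_cons, List.all_cons, Bool.and_eq_true, Bool.not_eq_true',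
        List.findIdx_cons]
      by_cases hg : g a
      · simp [hg]
      · simp only [hg, cond_false]
        rw [ih i (by simpa using hi)]
        simp [hg, Nat.succ_le_succ_iff]

omit [DecidableEq α] [Inhabited α] in
lemma findIdx_succ_eq_sum (g : α → Bool) (Q : List α) (hQ : Q.findIdx g < Q.length) :
    ((Q.findIdx g + 1 : ℕ) : ℚ)
      = ∑ i ∈ Finset.range Q.length, if ((Q.take i).all fun a => !g a) = true then 1 else 0 := by
  rw [Finset.sum_boole]
  have : (Finset.range Q.length).filter (fun i => ((Q.take i).all fun a => !g a) = true)
      = Finset.range (Q.findIdx g + 1) := by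
    ext i
    simp only [Finset.mem_filter, Finset.mem_range]
    constructor
    · rintro ⟨h1, h2⟩
      have := (take_all_not g Q i (le_of_lt h1)).1 h2
      omega
    · intro h
      have hi : i ≤ Q.findIdx g := by omega
      exact ⟨by omega, (take_all_not g Q i (le_trans hi (le_of_lt hQ))).2 hi⟩
  rw [this, Finset.card_range]


/-- Abel summation / telescoping. -/
lemma abel_tele (f : ℕ → ℚ) :
    ∀ N : ℕ, ∑ i ∈ Finset.Icc 1 N, (i : ℚ) * (f (i-1) - f i)
      = (∑ i ∈ Finset.range N, f i) - N * f N := by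
  intro N
  induction N with
  | zero => simp
  | succ N ih =>
    rw [Finset.sum_Icc_succ_top (by omega), ih, Finset.sum_range_succ]
    simp only [Nat.add_sub_cancel]
    push_cast
    ring

def qprod (N m : ℕ) (i : ℕ) : ℚ :=
  ∏ j ∈ Finset.Icc 1 i, (1 - (m : ℚ) / ((N - j + 1 : ℕ) : ℚ))

lemma qprod_succ (N m i : ℕ) :
    qprod N m (i+1) = qprod N m i * (1 - (m : ℚ) / ((N - (i+1) + 1 : ℕ) : ℚ)) := by
  rw [qprod, Finset.prod_Icc_succ_top (by omega)]
  rfl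

lemma qprod_eq_zero (N m : ℕ) (hm : 1 ≤ m) (hmN : m ≤ N) (i : ℕ) (hi : N - m + 1 ≤ i) :
    qprod N m i = 0 := by
  apply Finset.prod_eq_zero (i := N - m + 1)
  · rw [Finset.mem_Icc]; omega
  · have h1 : (N - (N - m + 1) + 1 : ℕ) = m := by omega
    rw [h1, div_self (by exact_mod_cast (by omega : m ≠ 0))]
    ring

lemma qprod_eq (N m : ℕ) (hm : 1 ≤ m) (hmN : m ≤ N) :
    ∀ i ≤ N, qprod N m i
      = (((N - m).descFactorial i * (N - i).factorial : ℕ) : ℚ) / (N.factorial : ℚ) := by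
  intro i
  induction i with
  | zero =>
    intro _
    simp [qprod, div_self (show (N.factorial : ℚ) ≠ 0 by exact_mod_cast N.factorial_ne_zero)]
  | succ i ih =>
    intro hi
    rw [qprod_succ, ih (by omega)]
    by_cases h : N - m < i + 1
    · have hz : (N - m).descFactorial (i+1) = 0 := Nat.descFactorial_of_lt h
      rw [hz]
      rcases Nat.lt_or_ge (N - m) i with h' | h'
      · have hz' : (N - m).descFactorial i = 0 := Nat.descFactorial_of_lt h'
        simp [hz']
      · -- i = N - m, the new factor is zero
        have hieq : i = N - m := by omega
        have h1 : (N - (i + 1) + 1 : ℕ) = m := by omega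
        rw [h1, div_self (by exact_mod_cast (by omega : m ≠ 0))]
        simp
    · -- i + 1 ≤ N - m
      have hd : (N - (i+1) + 1 : ℕ) = N - i := by omega
      have hcast1 : ((N - i : ℕ) : ℚ) = (N : ℚ) - i := by
        rw [Nat.cast_sub (by omega)]
      have hdesc : (N - m).descFactorial (i+1) = (N - m - i) * (N - m).descFactorial i :=
        Nat.descFactorial_succ _ _
      have hcast2 : ((N - m - i : ℕ) : ℚ) = (N : ℚ) - m - i := by
        rw [Nat.cast_sub (by omega), Nat.cast_sub (by omega)]
      have hfac : (N - i).factorial = (N - i) * (N - (i+1)).factorial := by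
        rw [show N - i = (N - (i+1)) + 1 by omega, Nat.factorial_succ]
      have hNi : ((N : ℚ) - i) ≠ 0 := by
        have : (i : ℚ) < N := by exact_mod_cast (by omega : i < N)
        intro h'; linarith
      have hNfac : (N.factorial : ℚ) ≠ 0 := by exact_mod_cast N.factorial_ne_zero
      rw [hd, hdesc]
      push_cast [hfac, hcast1, hcast2]
      field_simp
      ring

lemma sum_ipp (N m : ℕ) (hm : 1 ≤ m) (hmN : m ≤ N) :
    ∑ i ∈ Finset.Icc 1 N, (i : ℚ) * ((m : ℚ) / ((N - i + 1 : ℕ) : ℚ) * qprod N m (i-1))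
      = ∑ i ∈ Finset.range N, qprod N m i := by
  have hstep : ∀ i ∈ Finset.Icc 1 N,
      (i : ℚ) * ((m : ℚ) / ((N - i + 1 : ℕ) : ℚ) * qprod N m (i-1))
        = (i : ℚ) * (qprod N m (i-1) - qprod N m i) := by
    intro i hi
    rw [Finset.mem_Icc] at hi
    have h1 : qprod N m i = qprod N m (i-1) * (1 - (m : ℚ) / ((N - i + 1 : ℕ) : ℚ)) := by
      conv_lhs => rw [show i = (i-1)+1 by omega]
      rw [qprod_succ, show (i-1)+1 = i by omega]
    rw [h1]; ring
  rw [Finset.sum_congr rfl hstep, abel_tele,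
    qprod_eq_zero N m hm hmN N (by omega)]
  ring


lemma pp_eq (n k t i : ℕ) :
    pp n k t i = (t.choose k : ℚ) / ((n.choose k - i + 1 : ℕ) : ℚ) * qprod (n.choose k) (t.choose k) (i-1) := rfl

lemma mem_completeSeqs {n k : ℕ} {Q : List (Finset (Fin n))} :
    Q ∈ completeSeqs n k ↔ Q ~ (Finset.powersetCard k (Finset.univ : Finset (Fin n))).toList := by
  rw [completeSeqs, List.mem_toFinset, List.mem_permutations]

lemma sum_tau_eq (n k : ℕ) (hkn : k ≤ n) (s : Finset (Fin n)) (hs : k ≤ s.card) :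
    ∑ Q ∈ completeSeqs n k, (tau n Q s : ℚ)
      = ∑ i ∈ Finset.range (n.choose k),
          (((n.choose k - (s.card).choose k).descFactorial i
            * (n.choose k - i).factorial : ℕ) : ℚ) := by
  classical
  set l := (Finset.powersetCard k (Finset.univ : Finset (Fin n))).toList with hl
  set g : Finset (Fin n) → Bool := fun q => decide (q ⊆ s) with hg
  have hlnd : l.Nodup := Finset.nodup_toList _
  have hlen : l.length = n.choose k := by
    rw [Finset.length_toList, Finset.card_powersetCard, Finset.card_univ, Fintype.card_fin]
  have hAfilter : (Finset.powersetCard k (Finset.univ : Finset (Fin n))).filter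
      (fun q => q ⊆ s) = Finset.powersetCard k s := by
    ext q
    simp only [Finset.mem_filter, Finset.mem_powersetCard]
    constructor
    · rintro ⟨⟨_, h2⟩, h3⟩; exact ⟨h3, h2⟩
    · rintro ⟨h1, h2⟩; exact ⟨⟨Finset.subset_univ q, h2⟩, h1⟩
  have hcount : l.countP g = (s.card).choose k := by
    rw [List.countP_eq_length_filter,
      ← List.toFinset_card_of_nodup (hlnd.filter _), List.toFinset_filter]
    have : l.toFinset.filter (fun q => g q) = Finset.powersetCard k s := by
      rw [hl, Finset.toList_toFinset, ← hAfilter]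
      congr 1
      ext q
      simp [hg]
    rw [this, Finset.card_powersetCard]
  have hms : (s.card).choose k ≤ n.choose k := by
    have h1 : s.card ≤ n := by
      have := s.card_le_univ
      rwa [Fintype.card_fin] at this
    exact Nat.choose_le_choose k h1
  have hbad : l.countP (fun q => !g q) = n.choose k - (s.card).choose k := by
    have h2 := l.length_eq_countP_add_countP g
    simp only [decide_not, Bool.decide_coe] at h2
    rw [hlen, hcount] at h2
    omega
  -- rewrite each tau as a sum of indicators
  have htau : ∀ Q ∈ completeSeqs n k, (tau n Q s : ℚ)
      = ∑ i ∈ Finset.range (n.choose k),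
          if ((Q.take i).all fun q => !g q) = true then 1 else 0 := by
    intro Q hQ
    have hQp : Q ~ l := mem_completeSeqs.1 hQ
    have hQlen : Q.length = n.choose k := by rw [hQp.length_eq, hlen]
    obtain ⟨q₀, hq₀s, hq₀c⟩ := Finset.exists_subset_card_eq hs
    have hq₀Q : q₀ ∈ Q := by
      rw [hQp.mem_iff, hl, Finset.mem_toList, Finset.mem_powersetCard]
      exact ⟨Finset.subset_univ q₀, hq₀c⟩
    have hfi : Q.findIdx g < Q.length :=
      List.findIdx_lt_length_of_exists ⟨q₀, hq₀Q, by simp [hg, hq₀s]⟩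
    rw [tau, findIdx_succ_eq_sum g Q hfi, hQlen]
  rw [Finset.sum_congr rfl htau, Finset.sum_comm]
  refine Finset.sum_congr rfl fun i hi => ?_
  rw [Finset.mem_range] at hi
  rw [Finset.sum_boole]
  have : (completeSeqs n k).filter (fun Q => ((Q.take i).all fun q => !g q) = true)
      = l.permutations.toFinset.filter (fun Q => ((Q.take i).all fun q => !g q)) := rfl
  rw [this, cnt_eq (fun q => !g q) i l hlnd (by omega), hbad, hlen]

/-- The average `σ` of `T(Q)` over all `N!` complete sequences satisfies
`σ = (1/|S|) · Σ_{t=k}^{n} ( C(n,t) · Σ_{i=1}^{N} i · p_i(t) )`. -/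
theorem average_T_eq (n k : ℕ) (hk1 : 1 ≤ k) (hkn : k ≤ n) :
    ((Nat.factorial (Nat.choose n k) : ℚ))⁻¹ * ∑ Q ∈ completeSeqs n k, T n k Q
      = ((scenes n k).card : ℚ)⁻¹ *
          ∑ t ∈ Finset.Icc k n, (Nat.choose n t : ℚ) *
            ∑ i ∈ Finset.Icc 1 (Nat.choose n k), (i : ℚ) * pp n k t i := by
  classical
  set N := n.choose k with hN
  have hNfac : ((N.factorial : ℚ)) ≠ 0 := by exact_mod_cast N.factorial_ne_zero
  have hscene : ∀ s ∈ scenes n k,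
      ∑ Q ∈ completeSeqs n k, (tau n Q s : ℚ)
        = (N.factorial : ℚ) * ∑ i ∈ Finset.Icc 1 N, (i : ℚ) * pp n k s.card i := by
    intro s hs
    have hsk : k ≤ s.card := (Finset.mem_filter.1 hs).2
    have hm : 1 ≤ (s.card).choose k := Nat.choose_pos hsk
    have hsn : s.card ≤ n := by
      have := s.card_le_univ; rwa [Fintype.card_fin] at this
    have hmN : (s.card).choose k ≤ N := Nat.choose_le_choose k hsn
    rw [sum_tau_eq n k hkn s hsk]
    have h1 : ∑ i ∈ Finset.Icc 1 N, (i : ℚ) * pp n k s.card i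
        = ∑ i ∈ Finset.range N, qprod N ((s.card).choose k) i := by
      rw [← sum_ipp N _ hm hmN]
      exact Finset.sum_congr rfl fun i _ => by rw [pp_eq]
    rw [h1, Finset.mul_sum]
    refine Finset.sum_congr rfl fun i hi => ?_
    rw [Finset.mem_range] at hi
    rw [qprod_eq N _ hm hmN i (by omega), eq_comm, mul_comm]
    exact div_mul_cancel₀ _ hNfac
  -- unfold T and rearrange
  have hT : ∑ Q ∈ completeSeqs n k, T n k Q
      = ((scenes n k).card : ℚ)⁻¹ * ∑ s ∈ scenes n k, ∑ Q ∈ completeSeqs n k, (tau n Q s : ℚ) := by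
    simp only [T]
    rw [← Finset.mul_sum, Finset.sum_comm]
  rw [hT, Finset.sum_congr rfl hscene, ← Finset.mul_sum]
  have hfib : ∑ s ∈ scenes n k, ∑ i ∈ Finset.Icc 1 N, (i : ℚ) * pp n k s.card i
      = ∑ t ∈ Finset.Icc k n, (Nat.choose n t : ℚ) *
          ∑ i ∈ Finset.Icc 1 N, (i : ℚ) * pp n k t i := by
    have hmaps : ∀ s ∈ scenes n k, s.card ∈ Finset.Icc k n := by
      intro s hs
      have hsk : k ≤ s.card := (Finset.mem_filter.1 hs).2
      have hsn : s.card ≤ n := by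
        have := s.card_le_univ; rwa [Fintype.card_fin] at this
      rw [Finset.mem_Icc]; exact ⟨hsk, hsn⟩
    rw [← Finset.sum_fiberwise_of_maps_to hmaps]
    refine Finset.sum_congr rfl fun t ht => ?_
    rw [Finset.mem_Icc] at ht
    have hinner : ∀ s ∈ (scenes n k).filter fun s => s.card = t,
        ∑ i ∈ Finset.Icc 1 N, (i : ℚ) * pp n k s.card i
          = ∑ i ∈ Finset.Icc 1 N, (i : ℚ) * pp n k t i := by
      intro s hs
      rw [(Finset.mem_filter.1 hs).2]
    rw [Finset.sum_congr rfl hinner, Finset.sum_const, nsmul_eq_mul]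
    congr 2
    have : (scenes n k).filter (fun s => s.card = t)
        = Finset.powersetCard t (Finset.univ : Finset (Fin n)) := by
      ext s
      simp only [scenes, Finset.mem_filter, Finset.mem_univ, true_and,
        Finset.mem_powersetCard]
      constructor
      · rintro ⟨_, h2⟩; exact ⟨Finset.subset_univ s, h2⟩
      · rintro ⟨_, h2⟩; exact ⟨by omega, h2⟩
    rw [this, Finset.card_powersetCard, Finset.card_univ, Fintype.card_fin]
  rw [hfib]
  field_simp

end AuxProof
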